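/- Let λₙ = 1/(π²n²) and let γₙ± = λₙ · (-(β₁²+β₂²) ± sqrt((β₁²-β₂²)² + 4a²β₁²β₂²))/2 for β₁,β₂ ≥ 0 and |a| ≤ 1. Then the infinite product ∏ₙ≥₁ (1-γₙ⁺)(1-γₙ⁻) converges and equals (sinh c⁺/c⁺)·(sinh c⁻/c⁻), where c± = sqrt(((β₁²+β₂²) ± sqrt((β₁²-β₂²)² + 4a²β₁²β₂²))/2). -/

import Mathlib

/-- `sinh c / c`, extended by its limiting value `1` at `c = 0`. -/
noncomputable def sinhRatio (c : ℝ) : ℝ := if c = 0 then 1 else Real.sinh c / c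

open Filter Finset Topology

private lemma one_le_prod_aux {f : ℕ → ℝ} (hf : ∀ i, 1 ≤ f i) (s : Finset ℕ) :
    1 ≤ ∏ i ∈ s, f i := by
  calc (1 : ℝ) = ∏ _i ∈ s, 1 := by simp
    _ ≤ ∏ i ∈ s, f i := Finset.prod_le_prod (by simp) (fun i _ => hf i)

private lemma mono_prod_aux {f : ℕ → ℝ} (hf : ∀ i, 1 ≤ f i) :
    Monotone (fun s : Finset ℕ => ∏ i ∈ s, f i) := by
  intro s t hst
  show ∏ i ∈ s, f i ≤ ∏ i ∈ t, f i
  rw [← Finset.prod_sdiff (f := f) hst]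
  have h1 : (1 : ℝ) ≤ ∏ i ∈ t \ s, f i := one_le_prod_aux hf _
  have h2 : (0 : ℝ) ≤ ∏ i ∈ s, f i := le_trans zero_le_one (one_le_prod_aux hf s)
  nlinarith

set_option maxHeartbeats 1000000 in
/-- Euler product for `sinh`: for `c ≥ 0`,
`∏ (1 + c² / (π² (n+1)²)) = sinh c / c`. -/
lemma hasProd_sinhRatio (c : ℝ) (hc : 0 ≤ c) :
    HasProd (fun n : ℕ => 1 + c ^ 2 / (Real.pi ^ 2 * ((n : ℝ) + 1) ^ 2))
      (sinhRatio c) := by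
  set f : ℕ → ℝ := fun n => 1 + c ^ 2 / (Real.pi ^ 2 * ((n : ℝ) + 1) ^ 2) with hfdef
  have hπ : (0 : ℝ) < Real.pi := Real.pi_pos
  have hf1 : ∀ n, 1 ≤ f n := by
    intro n
    have hden : (0 : ℝ) < Real.pi ^ 2 * ((n : ℝ) + 1) ^ 2 := by positivity
    have : 0 ≤ c ^ 2 / (Real.pi ^ 2 * ((n : ℝ) + 1) ^ 2) := by positivity
    simp only [hfdef]; linarith
  rcases eq_or_lt_of_le hc with hc0 | hcpos
  · -- c = 0
    have : f = fun _ => 1 := by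
      funext n; simp [hfdef, ← hc0]
    rw [this, sinhRatio, if_pos hc0.symm]
    exact hasProd_one
  · -- c > 0 : use the complex Euler sine product at z = c/π * I
    have hcne : c ≠ 0 := ne_of_gt hcpos
    -- tendsto of partial products along range
    have hT : Tendsto (fun n => ∏ j ∈ Finset.range n, f j) atTop
        (𝓝 (Real.sinh c / c)) := by
      have hE := Complex.tendsto_euler_sin_prod ((c : ℂ) / (Real.pi : ℂ) * Complex.I)
      have hπc : (Real.pi : ℂ) ≠ 0 := by
        exact_mod_cast ne_of_gt hπ
      have hz : (Real.pi : ℂ) * ((c : ℂ) / (Real.pi : ℂ) * Complex.I) = (c : ℂ) * Complex.I := by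
        field_simp
      have hsin : Complex.sin ((c : ℂ) * Complex.I) = (Real.sinh c : ℂ) * Complex.I := by
        rw [Complex.sin_mul_I, Complex.ofReal_sinh]
      rw [hz, hsin] at hE
      have hprod : ∀ n, ((c : ℂ) * Complex.I *
          ∏ j ∈ Finset.range n, ((1 : ℂ) - ((c : ℂ) / (Real.pi : ℂ) * Complex.I) ^ 2 /
            ((j : ℂ) + 1) ^ 2)) = (c : ℂ) * Complex.I * ((∏ j ∈ Finset.range n, f j : ℝ) : ℂ) := by
        intro n
        congr 1
        rw [Complex.ofReal_prod]
        refine Finset.prod_congr rfl fun j _ => ?_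
        have : ((c : ℂ) / (Real.pi : ℂ) * Complex.I) ^ 2 = -((c : ℂ) ^ 2 / (Real.pi : ℂ) ^ 2) := by
          rw [mul_pow, Complex.I_sq]; ring
        rw [this, hfdef]
        push_cast
        have h1 : ((Real.pi : ℂ)) ≠ 0 := hπc
        have h2 : ((j : ℂ) + 1) ≠ 0 := Nat.cast_add_one_ne_zero j
        field_simp
        ring
      simp only [hprod] at hE
      -- take imaginary parts
      have hIm : Tendsto (fun n => ((c : ℂ) * Complex.I *
          ((∏ j ∈ Finset.range n, f j : ℝ) : ℂ)).im) atTop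
          (𝓝 (((Real.sinh c : ℂ) * Complex.I).im)) :=
        (Complex.continuous_im.tendsto _).comp hE
      have him1 : ∀ n, ((c : ℂ) * Complex.I * ((∏ j ∈ Finset.range n, f j : ℝ) : ℂ)).im
          = c * ∏ j ∈ Finset.range n, f j := by
        intro n
        have h3 : (c : ℂ) * Complex.I * ((∏ j ∈ Finset.range n, f j : ℝ) : ℂ)
            = (((c * ∏ j ∈ Finset.range n, f j : ℝ)) : ℂ) * Complex.I := by
          push_cast; ring
        rw [h3, Complex.mul_I_im, Complex.ofReal_re]
      have him2 : ((Real.sinh c : ℂ) * Complex.I).im = Real.sinh c := by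
        rw [Complex.mul_I_im, Complex.ofReal_re]
      rw [him2] at hIm
      simp only [him1] at hIm
      have := hIm.div_const c
      simpa [mul_div_assoc, mul_div_cancel_left₀ _ hcne] using this
    -- monotone partial products
    have hmono : Monotone (fun s : Finset ℕ => ∏ i ∈ s, f i) := mono_prod_aux hf1
    have hmonoN : Monotone (fun n : ℕ => ∏ j ∈ Finset.range n, f j) :=
      fun m n h => hmono (Finset.range_mono h)
    -- IsLUB of all finset partial products
    have hLUB : IsLUB (Set.range fun s : Finset ℕ => ∏ i ∈ s, f i) (Real.sinh c / c) := by
      constructor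
      · rintro x ⟨s, rfl⟩
        obtain ⟨n, hn⟩ := Finset.exists_nat_subset_range s
        refine le_trans (hmono hn) ?_
        exact hmonoN.ge_of_tendsto hT n
      · intro b hb
        refine le_of_tendsto hT (Eventually.of_forall fun n => ?_)
        exact hb ⟨Finset.range n, rfl⟩
    have : HasProd f (Real.sinh c / c) := tendsto_atTop_isLUB hmono hLUB
    rwa [sinhRatio, if_neg hcne]

theorem fredholm_determinant_product
    (β₁ β₂ a : ℝ) (h₁ : 0 ≤ β₁) (h₂ : 0 ≤ β₂) (ha : |a| ≤ 1) :
    let D := Real.sqrt ((β₁ ^ 2 - β₂ ^ 2) ^ 2 + 4 * a ^ 2 * β₁ ^ 2 * β₂ ^ 2)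
    let cPlus := Real.sqrt (((β₁ ^ 2 + β₂ ^ 2) + D) / 2)
    let cMinus := Real.sqrt (((β₁ ^ 2 + β₂ ^ 2) - D) / 2)
    let lam : ℕ → ℝ := fun n => 1 / (Real.pi ^ 2 * ((n : ℝ) + 1) ^ 2)
    let γPlus : ℕ → ℝ := fun n => lam n * ((-(β₁ ^ 2 + β₂ ^ 2) + D) / 2)
    let γMinus : ℕ → ℝ := fun n => lam n * ((-(β₁ ^ 2 + β₂ ^ 2) - D) / 2)
    Multipliable (fun n => (1 - γPlus n) * (1 - γMinus n)) ∧
      (∏' n, (1 - γPlus n) * (1 - γMinus n)) = sinhRatio cPlus * sinhRatio cMinus := by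
  intro D cPlus cMinus lam γPlus γMinus
  have ha2 : a ^ 2 ≤ 1 := by
    have := abs_nonneg a
    nlinarith [sq_abs a]
  have hEnn : 0 ≤ (β₁ ^ 2 - β₂ ^ 2) ^ 2 + 4 * a ^ 2 * β₁ ^ 2 * β₂ ^ 2 := by positivity
  have hD0 : 0 ≤ D := Real.sqrt_nonneg _
  have hDS : D ≤ β₁ ^ 2 + β₂ ^ 2 := by
    have h : (β₁ ^ 2 - β₂ ^ 2) ^ 2 + 4 * a ^ 2 * β₁ ^ 2 * β₂ ^ 2 ≤ (β₁ ^ 2 + β₂ ^ 2) ^ 2 := by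
      nlinarith [sq_nonneg (β₁ * β₂), sq_nonneg β₁, sq_nonneg β₂]
    calc D ≤ Real.sqrt ((β₁ ^ 2 + β₂ ^ 2) ^ 2) := Real.sqrt_le_sqrt h
      _ = β₁ ^ 2 + β₂ ^ 2 := Real.sqrt_sq (by positivity)
  have hcP0 : 0 ≤ cPlus := Real.sqrt_nonneg _
  have hcM0 : 0 ≤ cMinus := Real.sqrt_nonneg _
  have hcPsq : cPlus ^ 2 = ((β₁ ^ 2 + β₂ ^ 2) + D) / 2 :=
    Real.sq_sqrt (by positivity)
  have hcMsq : cMinus ^ 2 = ((β₁ ^ 2 + β₂ ^ 2) - D) / 2 :=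
    Real.sq_sqrt (by linarith)
  have hP := hasProd_sinhRatio cPlus hcP0
  have hM := hasProd_sinhRatio cMinus hcM0
  have hkey : ∀ n : ℕ, (1 - γPlus n) * (1 - γMinus n) =
      (1 + cMinus ^ 2 / (Real.pi ^ 2 * ((n : ℝ) + 1) ^ 2)) *
      (1 + cPlus ^ 2 / (Real.pi ^ 2 * ((n : ℝ) + 1) ^ 2)) := by
    intro n
    have hden : (0 : ℝ) < Real.pi ^ 2 * ((n : ℝ) + 1) ^ 2 := by positivity
    simp only [γPlus, γMinus, lam, hcPsq, hcMsq]
    field_simp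
    ring
  have hProd : HasProd (fun n => (1 - γPlus n) * (1 - γMinus n))
      (sinhRatio cMinus * sinhRatio cPlus) := by
    have := hM.mul hP
    simpa only [← hkey] using this
  refine ⟨hProd.multipliable, ?_⟩
  rw [hProd.tprod_eq, mul_comm]
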